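/- Let Λ be a full-rank sublattice of Z^d with determinant D = det(Λ). Then every point of Z^d lies in (D − 1)·S + Λ, where S = {x ∈ R^d_{≥0} : x_1 + ... + x_d ≤ 1} is the standard d-dimensional simplex. -/
import Mathlib

lemma sum_clamp_aux (d : ℕ) (Y : ℕ → ℤ) (hY : ∀ i, 0 ≤ Y i) (k : ℤ)
    (hk0 : 0 ≤ k) (hks : k ≤ ∑ i ∈ Finset.range d, Y i) :
    ∑ i ∈ Finset.range d, min (Y i) (max 0 (k - ∑ j ∈ Finset.range i, Y j)) = k := by
  have hS : ∀ n, 0 ≤ ∑ j ∈ Finset.range n, Y j :=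
    fun n => Finset.sum_nonneg fun j _ => hY j
  have hterm : ∀ i ∈ Finset.range d,
      min (Y i) (max 0 (k - ∑ j ∈ Finset.range i, Y j))
        = min k (∑ j ∈ Finset.range (i + 1), Y j) - min k (∑ j ∈ Finset.range i, Y j) := by
    intro i _
    rw [Finset.sum_range_succ]
    have h1 := hY i
    have h2 := hS i
    omega
  rw [Finset.sum_congr rfl hterm,
    Finset.sum_range_sub (fun n => min k (∑ j ∈ Finset.range n, Y j))]
  simp only [Finset.range_zero, Finset.sum_empty]
  omega

lemma key_lemma (d D : ℕ) (Λ : AddSubgroup (Fin d → ℤ))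
    (hD : Nat.card ((Fin d → ℤ) ⧸ Λ) = D) (hD0 : 0 < D) :
    ∀ s : ℕ, ∀ y : Fin d → ℤ, (∀ i, 0 ≤ y i) → ∑ i, y i ≤ (s : ℤ) →
    ∃ l ∈ Λ, (∀ i, 0 ≤ y i - l i) ∧ ∑ i, (y i - l i) ≤ (D : ℤ) - 1 := by
  have hfin : Finite ((Fin d → ℤ) ⧸ Λ) := by
    have : 0 < Nat.card ((Fin d → ℤ) ⧸ Λ) := by omega
    exact (Nat.card_pos_iff.mp this).2
  haveI := Fintype.ofFinite ((Fin d → ℤ) ⧸ Λ)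
  intro s
  induction s with
  | zero =>
    intro y hy hs
    refine ⟨0, zero_mem _, by simpa using hy, ?_⟩
    have h1 : 0 ≤ ∑ i, y i := Finset.sum_nonneg fun i _ => hy i
    simp only [Pi.zero_apply, sub_zero]
    omega
  | succ n ih =>
    intro y hy hs
    by_cases hcase : ∑ i, y i ≤ (D : ℤ) - 1
    · exact ⟨0, zero_mem _, by simpa using hy, by simpa using hcase⟩
    push_neg at hcase
    -- set up the lattice path
    set Y : ℕ → ℤ := fun j => if h : j < d then y ⟨j, h⟩ else 0 with hYdef
    have hYnn : ∀ j, 0 ≤ Y j := by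
      intro j
      simp only [hYdef]
      split
      · exact hy _
      · exact le_refl 0
    have hYval : ∀ i : Fin d, Y i.val = y i := by
      intro i; simp [hYdef, i.isLt]
    have hsumY : ∑ i ∈ Finset.range d, Y i = ∑ i, y i := by
      rw [← Fin.sum_univ_eq_sum_range]
      exact Finset.sum_congr rfl fun i _ => hYval i
    set p : ℕ → (Fin d → ℤ) :=
      fun k i => min (Y i.val) (max 0 ((k : ℤ) - ∑ j ∈ Finset.range i.val, Y j)) with hpdef
    have hp_nonneg : ∀ k i, 0 ≤ p k i := by
      intro k i
      have := hYnn i.val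
      simp only [hpdef]
      omega
    have hp_le : ∀ k i, p k i ≤ y i := by
      intro k i
      simp only [hpdef, hYval i]
      omega
    have hp_mono : ∀ (a b : ℕ), a ≤ b → ∀ i, p a i ≤ p b i := by
      intro a b hab i
      have : (a : ℤ) ≤ b := by exact_mod_cast hab
      simp only [hpdef]
      omega
    have hp_sum : ∀ k : ℕ, (k : ℤ) ≤ ∑ i, y i → ∑ i, p k i = (k : ℤ) := by
      intro k hk
      have := sum_clamp_aux d Y hYnn (k : ℤ) (by positivity) (by omega)
      rw [← this, ← Fin.sum_univ_eq_sum_range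
        (fun m => min (Y m) (max 0 ((k : ℤ) - ∑ j ∈ Finset.range m, Y j))) d]
    -- pigeonhole
    have hcard : Fintype.card ((Fin d → ℤ) ⧸ Λ) < Fintype.card (Fin (D + 1)) := by
      rw [Fintype.card_fin, ← Nat.card_eq_fintype_card, hD]
      omega
    obtain ⟨a, b, hab, hfab⟩ := Fintype.exists_ne_map_eq_of_card_lt
      (fun k : Fin (D + 1) => (QuotientAddGroup.mk (p k.val) : (Fin d → ℤ) ⧸ Λ)) hcard
    -- reduce to ordered pair
    have main : ∀ a b : Fin (D + 1), a < b →
        (QuotientAddGroup.mk (p a.val) : (Fin d → ℤ) ⧸ Λ) = QuotientAddGroup.mk (p b.val) →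
        ∃ l ∈ Λ, (∀ i, 0 ≤ y i - l i) ∧ ∑ i, (y i - l i) ≤ (D : ℤ) - 1 := by
      intro a b hlt heq
      have hmem : p b.val - p a.val ∈ Λ := by
        have := (QuotientAddGroup.eq_iff_sub_mem).mp heq.symm
        exact this
      set y' : Fin d → ℤ := y - (p b.val - p a.val) with hy'def
      have hy' : ∀ i, 0 ≤ y' i := by
        intro i
        have h1 := hp_nonneg a.val i
        have h2 := hp_le b.val i
        simp only [hy'def, Pi.sub_apply]
        omega
      have hb_le : (b.val : ℤ) ≤ ∑ i, y i := by
        have : b.val ≤ D := by omega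
        omega
      have ha_le : (a.val : ℤ) ≤ ∑ i, y i := by
        have : a.val ≤ D := by omega
        omega
      have hsum' : ∑ i, y' i = ∑ i, y i - (b.val : ℤ) + (a.val : ℤ) := by
        simp only [hy'def, Pi.sub_apply]
        rw [Finset.sum_sub_distrib, Finset.sum_sub_distrib, hp_sum b.val hb_le,
          hp_sum a.val ha_le]
        ring
      have hsum'n : ∑ i, y' i ≤ (n : ℤ) := by
        have hab' : (a.val : ℤ) + 1 ≤ (b.val : ℤ) := by exact_mod_cast hlt
        push_cast at hs ⊢
        omega
      obtain ⟨l₂, hl₂, hl₂nn, hl₂sum⟩ := ih y' hy' hsum'n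
      refine ⟨(p b.val - p a.val) + l₂, add_mem hmem hl₂, ?_, ?_⟩
      · intro i
        have := hl₂nn i
        simp only [hy'def, Pi.sub_apply] at this ⊢
        simp only [Pi.add_apply, Pi.sub_apply]
        omega
      · have : ∀ i, y i - ((p b.val - p a.val) + l₂) i = y' i - l₂ i := by
          intro i
          simp only [hy'def, Pi.add_apply, Pi.sub_apply]
          ring
        rw [Finset.sum_congr rfl fun i _ => this i]
        exact hl₂sum
    rcases hab.lt_or_gt with h | h
    · exact main a b h hfab
    · exact main b a h hfab.symm

theorem stmt_4 (d : ℕ) (Λ : AddSubgroup (Fin d → ℤ)) (D : ℕ)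
    (hD : Nat.card ((Fin d → ℤ) ⧸ Λ) = D) (hD0 : 0 < D)
    (x : Fin d → ℤ) :
    ∃ l ∈ Λ, (∀ i, 0 ≤ x i - l i) ∧ ∑ i, (x i - l i) ≤ (D : ℤ) - 1 := by
  -- every D-th multiple is in Λ
  have hDmem : ∀ z : Fin d → ℤ, D • z ∈ Λ := by
    intro z
    have h1 : D • (QuotientAddGroup.mk z : (Fin d → ℤ) ⧸ Λ) = 0 := by
      rw [← hD]
      exact card_nsmul_eq_zero'
    refine (QuotientAddGroup.eq_zero_iff (D • z)).mp ?_
    rw [QuotientAddGroup.mk_nsmul]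
    exact h1
  set m : Fin d → ℤ := fun i => ((x i).natAbs : ℤ) with hmdef
  set y : Fin d → ℤ := x + D • m with hydef
  have hy : ∀ i, 0 ≤ y i := by
    intro i
    show 0 ≤ (x + D • m) i
    rw [Pi.add_apply, Pi.smul_apply, hmdef]
    simp only [nsmul_eq_mul]
    have h1 : (1 : ℤ) ≤ D := by exact_mod_cast hD0
    have h4 : (0 : ℤ) ≤ ((x i).natAbs : ℤ) := by positivity
    have h5 : -(((x i).natAbs : ℤ)) ≤ x i := by omega
    have hmul : ((x i).natAbs : ℤ) ≤ (D : ℤ) * ((x i).natAbs : ℤ) :=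
      le_mul_of_one_le_left h4 h1
    linarith
  obtain ⟨l, hl, hlnn, hlsum⟩ :=
    key_lemma d D Λ hD hD0 (∑ i, y i).toNat y hy (by
      have : 0 ≤ ∑ i, y i := Finset.sum_nonneg fun i _ => hy i
      omega)
  refine ⟨l - D • m, sub_mem hl (hDmem m), ?_, ?_⟩
  · intro i
    have := hlnn i
    simp only [hydef, Pi.add_apply, Pi.sub_apply] at this ⊢
    omega
  · have heq : ∀ i, x i - (l - D • m) i = y i - l i := by
      intro i
      simp only [hydef, Pi.add_apply, Pi.sub_apply]
      ring
    rw [Finset.sum_congr rfl fun i _ => heq i]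
    exact hlsum
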